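/- Let X = ℤ × ℤ with the topology generated by the subbase consisting of the sets U_{j,k} = {(x,y) : x > j or y > k} and V_{j,k} = {(x,y) : x < j or y < k} for j, k ∈ ℤ. Then X is T1 and hyperconnected. -/

import Mathlib

/-- `ℤ × ℤ` with the topology generated by the subbase consisting of the sets
`U_{j,k} = {(x,y) : x > j ∨ y > k}` and `V_{j,k} = {(x,y) : x < j ∨ y < k}`. -/
def SlopedPlane : Type := ℤ × ℤ

instance : TopologicalSpace SlopedPlane :=
  TopologicalSpace.generateFrom
    {S : Set SlopedPlane | ∃ j k : ℤ,
      S = {p : ℤ × ℤ | p.1 > j ∨ p.2 > k} ∨ S = {p : ℤ × ℤ | p.1 < j ∨ p.2 < k}}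

/-- A space is T1 if all singletons are closed. -/
def T1 (X : Type*) [TopologicalSpace X] : Prop := ∀ x : X, IsClosed ({x} : Set X)

/-- A space is hyperconnected if any two nonempty open sets intersect. -/
def Hyperconnected (X : Type*) [TopologicalSpace X] : Prop :=
  ∀ U V : Set X, IsOpen U → IsOpen V → U.Nonempty → V.Nonempty → (U ∩ V).Nonempty

lemma sloped_key : ∀ U : Set SlopedPlane,
    TopologicalSpace.GenerateOpen
      {S : Set SlopedPlane | ∃ j k : ℤ,
        S = {p : ℤ × ℤ | p.1 > j ∨ p.2 > k} ∨ S = {p : ℤ × ℤ | p.1 < j ∨ p.2 < k}} U →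
    U.Nonempty → ∃ N : ℤ, ∀ n ≥ N, ((n, -n) : ℤ × ℤ) ∈ U := by
  intro U hU
  induction hU with
  | basic S hS =>
    intro _
    obtain ⟨j, k, h | h⟩ := hS
    · exact ⟨j + 1, fun n hn => by subst h; exact Or.inl (by omega)⟩
    · exact ⟨-k + 1, fun n hn => by subst h; exact Or.inr (by omega)⟩
  | univ => exact fun _ => ⟨0, fun n _ => trivial⟩
  | inter U V hU hV ihU ihV =>
    rintro ⟨p, hp⟩
    obtain ⟨N1, h1⟩ := ihU ⟨p, hp.1⟩
    obtain ⟨N2, h2⟩ := ihV ⟨p, hp.2⟩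
    exact ⟨max N1 N2, fun n hn =>
      ⟨h1 n (le_trans (le_max_left _ _) hn), h2 n (le_trans (le_max_right _ _) hn)⟩⟩
  | sUnion S hS ih =>
    rintro ⟨p, t, ht, hpt⟩
    obtain ⟨N, hN⟩ := ih t ht ⟨p, hpt⟩
    exact ⟨N, fun n hn => ⟨t, ht, hN n hn⟩⟩

theorem stmt7 : T1 SlopedPlane ∧ Hyperconnected SlopedPlane := by
  constructor
  · intro x
    obtain ⟨a, b⟩ := (x : ℤ × ℤ)
    rw [← isOpen_compl_iff]
    have : ({((a, b) : SlopedPlane)} : Set SlopedPlane)ᶜ =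
        ({p : ℤ × ℤ | p.1 > a ∨ p.2 > b} : Set SlopedPlane) ∪
        {p : ℤ × ℤ | p.1 < a ∨ p.2 < b} := by
      ext ⟨px, py⟩
      show ¬((px, py) = (a, b)) ↔ (px > a ∨ py > b) ∨ (px < a ∨ py < b)
      rw [Prod.mk.injEq]
      omega
    show IsOpen (({((a, b) : SlopedPlane)} : Set SlopedPlane)ᶜ)
    rw [this]
    exact IsOpen.union
      (TopologicalSpace.isOpen_generateFrom_of_mem ⟨a, b, Or.inl rfl⟩)
      (TopologicalSpace.isOpen_generateFrom_of_mem ⟨a, b, Or.inr rfl⟩)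
  · intro U V hU hV hUne hVne
    obtain ⟨N1, h1⟩ := sloped_key U hU hUne
    obtain ⟨N2, h2⟩ := sloped_key V hV hVne
    exact ⟨(max N1 N2, -(max N1 N2)),
      h1 _ (le_max_left _ _), h2 _ (le_max_right _ _)⟩
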